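/- Let b_1, …, b_r be a T-chain with parameters (d, n, a). Then the sum of the entries satisfies b_1 + b_2 + ⋯ + b_r = 3r + 2 − d; equivalently, d = 3r + 2 − Σ_{i=1}^r b_i is determined by the length and the sum of the entries. -/

import Mathlib

/-- Hirzebruch–Jung continued fraction of a list of integers:
`hjcf [] = 0` (junk value), `hjcf (b :: l) = b - 1 / hjcf l`.
Since `(0 : ℚ)⁻¹ = 0`, this gives `hjcf [b] = b`, matching the recursion
`[b_r] = b_r`, `[b_1, …, b_r] = b_1 − 1/[b_2, …, b_r]`. -/
def hjcf : List ℤ → ℚ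
  | [] => 0
  | b :: l => (b : ℚ) - (hjcf l)⁻¹

namespace TAux

/-- continuant quadruple (P, Q, X, Y):
`hjcf l = P/Q`, and `X, Y` are the continuants of the list with the last
entry removed (sign-normalized), satisfying `Q*X - P*Y = 1`. -/
def pf : List ℤ → ℤ × ℤ × ℤ × ℤ
  | [] => (1, 0, 0, -1)
  | b :: t => (b * (pf t).1 - (pf t).2.1, (pf t).1,
      b * (pf t).2.2.1 - (pf t).2.2.2, (pf t).2.2.1)

@[simp] lemma pf_nil : pf [] = (1, 0, 0, -1) := rfl

@[simp] lemma pf_cons (b : ℤ) (t : List ℤ) :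
    pf (b :: t) = (b * (pf t).1 - (pf t).2.1, (pf t).1,
      b * (pf t).2.2.1 - (pf t).2.2.2, (pf t).2.2.1) := rfl

lemma pf_det (l : List ℤ) :
    (pf l).2.1 * (pf l).2.2.1 - (pf l).1 * (pf l).2.2.2 = 1 := by
  induction l with
  | nil => simp
  | cons b t ih => simp only [pf_cons]; ring_nf; ring_nf at ih; linarith

lemma pf_snoc (l : List ℤ) (c : ℤ) :
    pf (l ++ [c]) = (c * (pf l).1 - (pf l).2.2.1, c * (pf l).2.1 - (pf l).2.2.2,
      (pf l).1, (pf l).2.1) := by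
  induction l with
  | nil => simp
  | cons b t ih =>
      simp only [List.cons_append, pf_cons, ih]
      refine Prod.ext ?_ (Prod.ext ?_ rfl) <;> simp <;> ring

lemma pf_reverse (l : List ℤ) :
    pf l.reverse = ((pf l).1, (pf l).2.2.1, (pf l).2.1, (pf l).2.2.2) := by
  induction l with
  | nil => simp
  | cons b t ih => simp [pf_snoc, ih]

/-- basic bounds, valid for any list with entries ≥ 2 (including `[]`). -/
lemma pf_bounds0 (l : List ℤ) (h : ∀ b ∈ l, 2 ≤ b) :
    0 ≤ (pf l).2.1 ∧ (pf l).2.1 + 1 ≤ (pf l).1 := by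
  induction l with
  | nil => simp
  | cons b t ih =>
      have hb : 2 ≤ b := h b (by simp)
      have ih' := ih (fun x hx => h x (by simp [hx]))
      simp only [pf_cons]
      constructor
      · linarith [ih'.1, ih'.2]
      · nlinarith [ih'.1, ih'.2]

/-- bounds for nonempty lists with entries ≥ 2. -/
lemma pf_bounds1 (l : List ℤ) (hne : l ≠ []) (h : ∀ b ∈ l, 2 ≤ b) :
    1 ≤ (pf l).2.1 ∧ 0 ≤ (pf l).2.2.2 ∧ (pf l).2.2.2 + 1 ≤ (pf l).2.2.1 ∧
      1 ≤ (pf l).2.1 - (pf l).2.2.2 ∧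
      (pf l).2.1 - (pf l).2.2.2 ≤ (pf l).1 - (pf l).2.2.1 := by
  induction l with
  | nil => exact absurd rfl hne
  | cons b t ih =>
      have hb : 2 ≤ b := h b (by simp)
      by_cases ht : t = []
      · subst ht; simp; omega
      · have ih' := ih ht (fun x hx => h x (by simp [hx]))
        obtain ⟨h1, h2, h3, h4, h5⟩ := ih'
        simp only [pf_cons]
        refine ⟨by linarith, by linarith, by nlinarith, by linarith, by nlinarith⟩

lemma P_pos (l : List ℤ) (h : ∀ b ∈ l, 2 ≤ b) : 0 < (pf l).1 := by
  have := pf_bounds0 l h; omega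

lemma P_eq_one_iff (l : List ℤ) (h : ∀ b ∈ l, 2 ≤ b) : l = [] ↔ (pf l).1 = 1 := by
  constructor
  · intro hl; subst hl; rfl
  · intro hp
    by_contra hne
    have h0 := pf_bounds0 l h
    have h1 := pf_bounds1 l hne h
    omega

lemma hjcf_eq (l : List ℤ) (hne : l ≠ []) (h : ∀ b ∈ l, 2 ≤ b) :
    hjcf l = ((pf l).1 : ℚ) / ((pf l).2.1 : ℚ) := by
  induction l with
  | nil => exact absurd rfl hne
  | cons b t ih =>
      by_cases ht : t = []
      · subst ht; simp [hjcf]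
      · have ht2 : ∀ x ∈ t, 2 ≤ x := fun x hx => h x (by simp [hx])
        have ih' := ih ht ht2
        have hq : 1 ≤ (pf t).2.1 := (pf_bounds1 t ht ht2).1
        have hp : 0 < (pf t).1 := P_pos t ht2
        have hpQ : ((pf t).1 : ℚ) ≠ 0 := by exact_mod_cast hp.ne'
        have hqQ : ((pf t).2.1 : ℚ) ≠ 0 := by
          have : (0:ℤ) < (pf t).2.1 := by omega
          exact_mod_cast this.ne'
        rw [hjcf, ih', inv_div]
        simp only [pf_cons]
        push_cast
        field_simp

end TAux

namespace TAux2
open TAux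

lemma isCoprime_PQ (l : List ℤ) : IsCoprime (pf l).1 (pf l).2.1 :=
  ⟨-(pf l).2.2.2, (pf l).2.2.1, by linarith [pf_det l]⟩

/-- uniqueness of the (X, Y) continuants given (P, Q) and the det relation. -/
lemma XY_unique (l : List ℤ) (hne : l ≠ []) (h2 : ∀ b ∈ l, 2 ≤ b) (C D : ℤ)
    (hdet : (pf l).2.1 * C - (pf l).1 * D = 1)
    (hC0 : 0 ≤ C) (hC1 : C < (pf l).1) :
    (pf l).2.2.1 = C ∧ (pf l).2.2.2 = D := by
  have det := pf_det l
  have hb := pf_bounds1 l hne h2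
  have hb0 := pf_bounds0 l h2
  have h1 : (pf l).2.1 * ((pf l).2.2.1 - C) = (pf l).1 * ((pf l).2.2.2 - D) := by
    ring_nf; ring_nf at det hdet; linarith
  have hdvd : (pf l).1 ∣ (pf l).2.1 * ((pf l).2.2.1 - C) := ⟨_, h1⟩
  have hPdvd : (pf l).1 ∣ ((pf l).2.2.1 - C) :=
    (isCoprime_PQ l).dvd_of_dvd_mul_left hdvd
  have hXC : (pf l).2.2.1 - C = 0 := by
    refine Int.eq_zero_of_abs_lt_dvd hPdvd ?_
    rw [abs_lt]; omega
  have hX : (pf l).2.2.1 = C := by omega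
  refine ⟨hX, ?_⟩
  have hP0 : (pf l).1 ≠ 0 := by omega
  have : (pf l).1 * ((pf l).2.2.2 - D) = 0 := by rw [← h1, hXC, mul_zero]
  have := mul_eq_zero.1 this
  omega

lemma identify (l : List ℤ) (hne : l ≠ []) (h2 : ∀ b ∈ l, 2 ≤ b)
    (d n a : ℤ) (hd : 1 ≤ d) (hn : 2 ≤ n) (ha0 : 0 < a) (han : a < n)
    (hp : (pf l).1 = d * n ^ 2) (hq : (pf l).2.1 = d * n * a - 1) :
    (pf l).2.2.1 = d * n * (n - a) - 1 ∧ (pf l).2.2.2 = d * a * (n - a) - 1 := by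
  apply XY_unique l hne h2 _ _ ?_ ?_ ?_
  · rw [hp, hq]; ring
  · nlinarith [mul_pos (mul_pos (show (0:ℤ) < d by omega) (show (0:ℤ) < n by omega))
      (show (0:ℤ) < n - a by omega)]
  · rw [hp]
    nlinarith [mul_lt_mul_of_pos_left (show n - a < n by omega)
      (mul_pos (show (0:ℤ) < d by omega) (show (0:ℤ) < n by omega))]

end TAux2

namespace TAux3
open TAux TAux2

lemma lemK : ∀ (l : List ℤ), l ≠ [] → (∀ b ∈ l, 2 ≤ b) → ∀ k : ℤ, 1 ≤ k →
    (pf l).1 = 2 * k + 1 → (pf l).2.1 = 2 * k - 1 →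
    l.sum = 2 * k + 1 ∧ (l.length : ℤ) = k := by
  intro l
  induction l with
  | nil => intro h; exact absurd rfl h
  | cons b t ih =>
    intro _ h2 k hk hp hq
    have hb : 2 ≤ b := h2 b (by simp)
    have ht2 : ∀ x ∈ t, 2 ≤ x := fun x hx => h2 x (by simp [hx])
    have hpt : (pf t).1 = 2 * k - 1 := by simpa using hq
    by_cases hk1 : k = 1
    · subst hk1
      have htnil : t = [] := (P_eq_one_iff t ht2).2 (by omega)
      subst htnil
      simp only [pf_cons, pf_nil] at hp
      simp at hp ⊢
      omega
    · have hk2 : 2 ≤ k := by omega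
      have htne : t ≠ [] := by
        intro h; subst h; simp at hpt; omega
      obtain ⟨hqt1, _, _, _, _⟩ := pf_bounds1 t htne ht2
      have hqt2 : (pf t).2.1 + 1 ≤ (pf t).1 := (pf_bounds0 t ht2).2
      have hP : b * (pf t).1 - (pf t).2.1 = 2 * k + 1 := by simpa using hp
      have hb2 : b = 2 := by
        by_contra hb3
        have hb3' : 3 ≤ b := by omega
        nlinarith [mul_nonneg (show (0:ℤ) ≤ b - 3 by omega)
          (show (0:ℤ) ≤ 2 * k - 1 by omega)]
      subst hb2
      have hqt : (pf t).2.1 = 2 * (k - 1) - 1 := by omega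
      have hpt' : (pf t).1 = 2 * (k - 1) + 1 := by omega
      obtain ⟨hs, hl⟩ := ih htne ht2 (k - 1) (by omega) hpt' hqt
      constructor
      · simp only [List.sum_cons]; omega
      · simp only [List.length_cons]; push_cast; omega

end TAux3

namespace TAux4
open TAux TAux2 TAux3

/-- the statement we prove by strong induction on length. -/
def KeyP (l : List ℤ) : Prop :=
  l ≠ [] → (∀ b ∈ l, 2 ≤ b) → ∀ d n a : ℤ, 1 ≤ d → 2 ≤ n → 0 < a → a < n →
    Int.gcd n a = 1 → (pf l).1 = d * n ^ 2 → (pf l).2.1 = d * n * a - 1 →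
    l.sum = 3 * (l.length : ℤ) + 2 - d

set_option maxHeartbeats 2000000 in
lemma hard (r : ℕ) (IH : ∀ m : List ℤ, m.length < r → KeyP m)
    (l : List ℤ) (hlen : l.length = r) (hne : l ≠ []) (h2 : ∀ b ∈ l, 2 ≤ b)
    (d n a : ℤ) (hd : 1 ≤ d) (hn : 3 ≤ n) (ha0 : 0 < a) (han : a < n)
    (hg : Int.gcd n a = 1) (h2a : n < 2 * a)
    (hp : (pf l).1 = d * n ^ 2) (hq : (pf l).2.1 = d * n * a - 1) :
    l.sum = 3 * (l.length : ℤ) + 2 - d := by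
  rcases l with _ | ⟨b, t⟩
  · exact absurd rfl hne
  have hb : 2 ≤ b := h2 b (by simp)
  have ht2 : ∀ x ∈ t, 2 ≤ x := fun x hx => h2 x (by simp [hx])
  have ha2 : 2 ≤ a := by omega
  have hpt : (pf t).1 = d * n * a - 1 := by simpa using hq
  have hdna : 5 ≤ d * n * a := by
    have h1 : (6:ℤ) ≤ n * a := by nlinarith
    have h2' : 0 ≤ (d - 1) * (n * a) :=
      mul_nonneg (by omega) (by nlinarith)
    nlinarith
  have htne : t ≠ [] := by
    intro h; subst h; simp at hpt; omega
  obtain ⟨hqt1, _, _, _, _⟩ := pf_bounds1 t htne ht2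
  have hqt2 : (pf t).2.1 + 1 ≤ (pf t).1 := (pf_bounds0 t ht2).2
  have hP : b * (pf t).1 - (pf t).2.1 = d * n ^ 2 := by simpa using hp
  -- first entry is 2
  have hb2 : b = 2 := by
    by_contra hb3
    have hb3' : 3 ≤ b := by omega
    have h1 : 3 * (d * n * a - 1) ≤ b * (pf t).1 := by
      rw [hpt]
      nlinarith [mul_nonneg (show (0:ℤ) ≤ b - 3 by omega)
        (show (0:ℤ) ≤ d * n * a - 1 by omega)]
    have h2' : d * n * (2 * a - n) ≥ 3 := by
      nlinarith [mul_pos (mul_pos (show (0:ℤ) < d by omega) (show (0:ℤ) < n by omega))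
        (show (0:ℤ) < 2 * a - n by omega),
        mul_le_mul_of_nonneg_left (show (1:ℤ) ≤ 2 * a - n by omega)
          (show (0:ℤ) ≤ d * n by nlinarith)]
    nlinarith [hP, hpt, hqt2]
  subst hb2
  have hqt : (pf t).2.1 = 2 * (d * n * a - 1) - d * n ^ 2 := by omega
  -- identify X, Y of t
  obtain ⟨hXt, hYt⟩ := XY_unique t htne ht2 (d * a * (n - a) - 1)
      (d * (n - a) * (2 * a - n) - 1)
      (by rw [hpt, hqt]; ring)
      (by nlinarith [mul_pos (mul_pos (show (0:ℤ) < d by omega) (show (0:ℤ) < a by omega))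
            (show (0:ℤ) < n - a by omega)])
      (by rw [hpt]
          nlinarith [mul_lt_mul_of_pos_left (show n - a < n by omega)
            (mul_pos (show (0:ℤ) < d by omega) (show (0:ℤ) < a by omega))])
  set c := t.getLast htne with hc
  have ht_eq : t.dropLast ++ [c] = t := List.dropLast_append_getLast htne
  -- last entry of t is ≥ 3
  have hcl : c ∈ t := List.getLast_mem htne
  have hc2 : 2 ≤ c := ht2 c hcl
  have hrev : t.reverse = c :: t.dropLast.reverse := by
    conv_lhs => rw [← ht_eq]
    simp
  have hrev2 : ∀ x ∈ t.dropLast.reverse, 2 ≤ x := by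
    intro x hx
    simp only [List.mem_reverse] at hx
    exact ht2 x ((List.dropLast_sublist t).subset hx)
  have hbrev := pf_bounds0 t.dropLast.reverse hrev2
  have hrevP : (pf t.reverse).1 = (pf t).1 := by rw [pf_reverse]
  have hrevQ : (pf t.reverse).2.1 = (pf t).2.2.1 := by rw [pf_reverse]
  have hrevP' : c * (pf t.dropLast.reverse).1 - (pf t.dropLast.reverse).2.1 = (pf t).1 := by
    rw [← hrevP, hrev]; simp
  have hrevQ' : (pf t.dropLast.reverse).1 = (pf t).2.2.1 := by
    rw [← hrevQ, hrev]; simp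
  have hc3 : 3 ≤ c := by
    by_contra hcc
    have hcc2 : c = 2 := by omega
    rw [hcc2, hrevQ', hXt] at hrevP'
    rw [hpt] at hrevP'
    have h2na : 2 * (n - a) ≤ n - 1 := by omega
    nlinarith [hbrev.1, mul_le_mul_of_nonneg_left h2na
      (show (0:ℤ) ≤ d * a by nlinarith),
      mul_le_mul_of_nonneg_left (show (2:ℤ) ≤ a by omega) (show (0:ℤ) ≤ d by omega)]
  -- the reduced list
  set l' := t.dropLast ++ [c - 1] with hl'
  have e1 := pf_snoc t.dropLast c
  rw [ht_eq] at e1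
  have hPi : (pf t.dropLast).1 = (pf t).2.2.1 := by rw [e1]
  have hQi : (pf t.dropLast).2.1 = (pf t).2.2.2 := by rw [e1]
  have hfront : (pf t).1 = c * (pf t.dropLast).1 - (pf t.dropLast).2.2.1 := by rw [e1]
  have hfront2 : (pf t).2.1 = c * (pf t.dropLast).2.1 - (pf t.dropLast).2.2.2 := by rw [e1]
  have e2 := pf_snoc t.dropLast (c - 1)
  have key1 : (pf l').1 = (pf t).1 - (pf t).2.2.1 := by
    rw [hl', e2, ← hPi, hfront]; ring
  have key2 : (pf l').2.1 = (pf t).2.1 - (pf t).2.2.2 := by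
    rw [hl', e2, ← hQi, hfront2]; ring
  have hp' : (pf l').1 = d * a ^ 2 := by rw [key1, hpt, hXt]; ring
  have hq' : (pf l').2.1 = d * a * (2 * a - n) - 1 := by rw [key2, hqt, hYt]; ring
  -- l' is a T-chain with parameters (d, a, 2a - n)
  have hl'ne : l' ≠ [] := by simp [hl']
  have hl'2 : ∀ x ∈ l', 2 ≤ x := by
    intro x hx
    rw [hl', List.mem_append] at hx
    rcases hx with hx | hx
    · exact ht2 x ((List.dropLast_sublist t).subset hx)
    · simp at hx; omega
  have hg' : Int.gcd a (2 * a - n) = 1 := by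
    rw [← Int.isCoprime_iff_gcd_eq_one]
    rw [← Int.isCoprime_iff_gcd_eq_one] at hg
    obtain ⟨u, v, huv⟩ := hg
    exact ⟨v + 2 * u, -u, by linear_combination huv⟩
  have hl'len : l'.length = t.length := by
    rw [hl', List.length_append, List.length_dropLast]
    have : 1 ≤ t.length := List.length_pos_iff.2 htne
    simp; omega
  have hlen' : l'.length < r := by
    rw [hl'len, ← hlen]; simp
  have hIH := IH l' hlen' hl'ne hl'2 d a (2 * a - n) hd ha2 (by omega) (by omega) hg' hp' hq'
  -- conclude
  have hsumt : t.sum = t.dropLast.sum + c := by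
    conv_lhs => rw [← ht_eq]
    simp
  have hsuml' : l'.sum = t.dropLast.sum + (c - 1) := by rw [hl']; simp
  have hll : ((2 :: t).length : ℤ) = (l'.length : ℤ) + 1 := by
    rw [hl'len]; simp
  simp only [List.sum_cons]
  rw [hll]
  omega



lemma key (r : ℕ) : ∀ l : List ℤ, l.length = r → KeyP l := by
  induction r using Nat.strong_induction_on with
  | _ r IH =>
    intro l hlen hne h2 d n a hd hn ha0 han hg hp hq
    have IH' : ∀ m : List ℤ, m.length < r → KeyP m := fun m hm => IH m.length hm m rfl
    by_cases hn2 : n = 2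
    · -- base case n = 2, a = 1
      subst hn2
      have ha1 : a = 1 := by omega
      subst ha1
      rcases l with _ | ⟨b, t⟩
      · exact absurd rfl hne
      have hb : 2 ≤ b := h2 b (by simp)
      have ht2 : ∀ x ∈ t, 2 ≤ x := fun x hx => h2 x (by simp [hx])
      have hpt : (pf t).1 = 2 * d - 1 := by
        simp only [pf_cons] at hq; omega
      have hP : b * (pf t).1 - (pf t).2.1 = 4 * d := by
        simp only [pf_cons] at hp
        have : d * 2 ^ 2 = 4 * d := by ring
        omega
      by_cases hd1 : d = 1
      · subst hd1
        have htnil : t = [] := (P_eq_one_iff t ht2).2 (by omega)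
        subst htnil
        simp only [pf_nil] at hP
        simp only [List.sum_cons, List.sum_nil, List.length_cons, List.length_nil]
        push_cast
        omega
      · have hd2 : 2 ≤ d := by omega
        have htne : t ≠ [] := by
          intro h; subst h; simp at hpt; omega
        obtain ⟨hqt1, _, _, _, _⟩ := pf_bounds1 t htne ht2
        have hqt2 : (pf t).2.1 + 1 ≤ (pf t).1 := (pf_bounds0 t ht2).2
        have hb3 : b = 3 := by
          by_contra hbb
          have : b = 2 ∨ 4 ≤ b := by omega
          rcases this with hb' | hb'
          · subst hb'; omega
          · nlinarith [mul_nonneg (show (0:ℤ) ≤ b - 4 by omega)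
              (show (0:ℤ) ≤ (pf t).1 by omega)]
        subst hb3
        obtain ⟨hs, hl⟩ := lemK t htne ht2 (d - 1) (by omega) (by omega) (by omega)
        simp only [List.sum_cons, List.length_cons]
        push_cast
        omega
    · have hn3 : 3 ≤ n := by omega
      have h2an : 2 * a ≠ n := by
        intro hh
        have hdvd : a ∣ n := ⟨2, by omega⟩
        have hh2 : (a : ℤ) ∣ (Int.gcd n a : ℤ) := Int.dvd_coe_gcd hdvd dvd_rfl
        rw [hg] at hh2
        have := Int.le_of_dvd one_pos hh2
        omega
      by_cases hcase : n < 2 * a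
      · exact hard r IH' l hlen hne h2 d n a hd hn3 ha0 han hg hcase hp hq
      · have hlt : 2 * a < n := by omega
        obtain ⟨hX, _⟩ := identify l hne h2 d n a hd (by omega) ha0 han hp hq
        have hrp : (pf l.reverse).1 = d * n ^ 2 := by rw [pf_reverse]; exact hp
        have hrq : (pf l.reverse).2.1 = d * n * (n - a) - 1 := by rw [pf_reverse]; exact hX
        have hg2 : Int.gcd n (n - a) = 1 := by
          rw [← Int.isCoprime_iff_gcd_eq_one] at hg ⊢
          obtain ⟨u, v, huv⟩ := hg
          exact ⟨u + v, -v, by linear_combination huv⟩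
        have h2' : ∀ x ∈ l.reverse, 2 ≤ x := fun x hx => h2 x (List.mem_reverse.1 hx)
        have hrne : l.reverse ≠ [] := by simpa using hne
        have hsr := hard r IH' l.reverse (by simpa using hlen) hrne h2' d n (n - a)
          hd hn3 (by omega) (by omega) hg2 (by omega) hrp hrq
        rw [List.sum_reverse, List.length_reverse] at hsr
        exact hsr

end TAux4


/-- `IsTChain l d n a` : the nonempty list `l` of integers, all ≥ 2, is a T-chain
with parameters `(d, n, a)`, i.e. its Hirzebruch–Jung continued fraction equals
`d n² / (d n a − 1)` where `d ≥ 1`, `n ≥ 2`, `0 < a < n`, `gcd(n, a) = 1`. -/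
def IsTChain (l : List ℤ) (d n a : ℤ) : Prop :=
  l ≠ [] ∧ (∀ b ∈ l, 2 ≤ b) ∧
  1 ≤ d ∧ 2 ≤ n ∧ 0 < a ∧ a < n ∧ Int.gcd n a = 1 ∧
  hjcf l = (d * n ^ 2 : ℚ) / (d * n * a - 1)

open TAux TAux2 TAux4 in
/-- For a T-chain with parameters (d, n, a) of length r,
b_1 + ⋯ + b_r = 3r + 2 − d. -/
theorem tchain_sum (l : List ℤ) (d n a : ℤ) (h : IsTChain l d n a) :
    l.sum = 3 * (l.length : ℤ) + 2 - d := by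
  obtain ⟨hne, h2, hd, hn, ha0, han, hg, hval⟩ := h
  rw [hjcf_eq l hne h2] at hval
  have hq1 : 1 ≤ (pf l).2.1 := (pf_bounds1 l hne h2).1
  have hp1 : 0 < (pf l).1 := P_pos l h2
  have hden : (2:ℤ) ≤ d * n * a := by
    have h1 : (2:ℤ) ≤ n * a := by nlinarith
    have h2' : 0 ≤ (d - 1) * (n * a) := mul_nonneg (by omega) (by nlinarith)
    nlinarith
  have hQne : ((pf l).2.1 : ℚ) ≠ 0 := by
    exact_mod_cast (show ((pf l).2.1 : ℤ) ≠ 0 by omega)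
  have hDne : ((d : ℚ) * n * a - 1) ≠ 0 := by
    have : ((d * n * a : ℤ) : ℚ) = (d:ℚ) * n * a := by push_cast; ring
    intro hcon
    have : ((d * n * a : ℤ) : ℚ) = 1 := by rw [this]; linarith
    have : d * n * a = 1 := by exact_mod_cast this
    omega
  have hc : (pf l).1 * (d * n * a - 1) = d * n ^ 2 * (pf l).2.1 := by
    rw [div_eq_div_iff hQne hDne] at hval
    exact_mod_cast hval
  have cop1 := isCoprime_PQ l
  have cop2 : IsCoprime (d * n ^ 2) (d * n * a - 1) :=
    ⟨d * a ^ 2, -(d * n * a + 1), by ring⟩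
  have hdvd1 : (pf l).1 ∣ d * n ^ 2 :=
    cop1.dvd_of_dvd_mul_right ⟨d * n * a - 1, hc.symm⟩
  have hdvd2 : d * n ^ 2 ∣ (pf l).1 :=
    cop2.dvd_of_dvd_mul_right ⟨(pf l).2.1, hc⟩
  have hP : (pf l).1 = d * n ^ 2 :=
    Int.dvd_antisymm (by omega) (by positivity) hdvd1 hdvd2
  have hQ : (pf l).2.1 = d * n * a - 1 := by
    rw [hP] at hc
    have hne0 : (d * n ^ 2 : ℤ) ≠ 0 := by positivity
    exact (mul_left_cancel₀ hne0 hc).symm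
  exact key l.length l rfl hne h2 d n a hd hn ha0 han hg hP hQ
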